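/- There exist problem instances in which the VLB market clearing yields strictly lower social welfare than the split market clearing with the same end-of-interval levels: in the six-interval example of Table IV, split clearing attains 842.5 while VLB clearing attains 772.5. -/
import Mathlib


/-- Single-interval (one-hour) split market clearing with one load and one generator:
the storage net charge is fixed to `pC = E^end − E^init` by the end-level constraint.
Storage capacity 2.5 MWh. -/
def FeasS (Einit Eend Dbar Pbar : ℝ) (d p : ℝ) : Prop :=
  d + (Eend - Einit) - p = 0 ∧ 0 ≤ d ∧ d ≤ Dbar ∧ 0 ≤ p ∧ p ≤ Pbar ∧
  0 ≤ Eend ∧ Eend ≤ 2.5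

/-- Optimality for the single-interval split market clearing. -/
def OptS (U C Einit Eend Dbar Pbar : ℝ) (d p : ℝ) : Prop :=
  FeasS Einit Eend Dbar Pbar d p ∧
    ∀ d' p', FeasS Einit Eend Dbar Pbar d' p' → U * d' - C * p' ≤ U * d - C * p

/-- Single-interval (one-hour) VLB market clearing with one load and one generator:
inter-storage energy `Ein` bid at price `S`; `a` intra-storage charge (non-negative at
the end of the single period), `b` inter-storage discharge, combined level within
`[0, 2.5]`, final level at least `Eend`. -/
def FeasV (Ein Eend Dbar Pbar : ℝ) (d p a b : ℝ) : Prop :=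
  d + a - p - b = 0 ∧ 0 ≤ d ∧ d ≤ Dbar ∧ 0 ≤ p ∧ p ≤ Pbar ∧
  0 ≤ a ∧ 0 ≤ b ∧ b ≤ Ein ∧
  0 ≤ a + (Ein - b) ∧ a + (Ein - b) ≤ 2.5 ∧ Eend ≤ a + (Ein - b)

/-- Optimality for the single-interval VLB market clearing. -/
def OptV (U C S Ein Eend Dbar Pbar : ℝ) (d p a b : ℝ) : Prop :=
  FeasV Ein Eend Dbar Pbar d p a b ∧
    ∀ d' p' a' b', FeasV Ein Eend Dbar Pbar d' p' a' b' →
      U * d' - C * p' - S * b' ≤ U * d - C * p - S * b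


-- Auxiliary lemmas

lemma optS_charge (C : ℝ) (hC : C < 25) : OptS 25 C 0 2.5 10 15 10 12.5 := by
  refine ⟨by norm_num [FeasS], ?_⟩
  rintro d' p' ⟨h1, h2, h3, h4, h5, h6, h7⟩
  nlinarith

lemma optS_discharge (C : ℝ) (hC : C < 25) : OptS 25 C 2.5 0 10 15 10 7.5 := by
  refine ⟨by norm_num [FeasS], ?_⟩
  rintro d' p' ⟨h1, h2, h3, h4, h5, h6, h7⟩
  nlinarith

lemma optS_charge_val {C d p : ℝ} (hC : C < 25) (h : OptS 25 C 0 2.5 10 15 d p) :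
    25 * d - C * p = 25 * 10 - C * 12.5 := by
  obtain ⟨⟨h1, h2, h3, h4, h5, _, _⟩, hopt⟩ := h
  have key := hopt 10 12.5 (by norm_num [FeasS])
  nlinarith

lemma optS_discharge_val {C d p : ℝ} (hC : C < 25) (h : OptS 25 C 2.5 0 10 15 d p) :
    25 * d - C * p = 25 * 10 - C * 7.5 := by
  obtain ⟨⟨h1, h2, h3, h4, h5, _, _⟩, hopt⟩ := h
  have key := hopt 10 7.5 (by norm_num [FeasS])
  nlinarith

lemma optV_1 : OptV 25 20 20 0 2.5 10 15 10 12.5 2.5 0 := by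
  refine ⟨by norm_num [FeasV], ?_⟩
  rintro d' p' a' b' ⟨h1, h2, h3, h4, h5, h6, h7, h8, h9, h10, h11⟩
  linarith

lemma optV_1_val {d p a b : ℝ} (h : OptV 25 20 20 0 2.5 10 15 d p a b) :
    25 * d - 20 * p = 0 := by
  obtain ⟨⟨h1, h2, h3, h4, h5, h6, h7, h8, h9, h10, h11⟩, hopt⟩ := h
  have key := hopt 10 12.5 2.5 0 (by norm_num [FeasV])
  linarith

lemma optV_2 : OptV 25 15 20 2.5 0 10 15 10 10 0 0 := by
  refine ⟨by norm_num [FeasV], ?_⟩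
  rintro d' p' a' b' ⟨h1, h2, h3, h4, h5, h6, h7, h8, h9, h10, h11⟩
  linarith

lemma optV_2_val {d p a b : ℝ} (h : OptV 25 15 20 2.5 0 10 15 d p a b) :
    25 * d - 15 * p = 100 := by
  obtain ⟨⟨h1, h2, h3, h4, h5, h6, h7, h8, h9, h10, h11⟩, hopt⟩ := h
  have key := hopt 10 10 0 0 (by norm_num [FeasV])
  linarith

lemma optV_3 : OptV 25 1 20 2.5 2.5 10 15 10 10 0 0 := by
  refine ⟨by norm_num [FeasV], ?_⟩
  rintro d' p' a' b' ⟨h1, h2, h3, h4, h5, h6, h7, h8, h9, h10, h11⟩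
  linarith

lemma optV_3_val {d p a b : ℝ} (h : OptV 25 1 20 2.5 2.5 10 15 d p a b) :
    25 * d - 1 * p = 240 := by
  obtain ⟨⟨h1, h2, h3, h4, h5, h6, h7, h8, h9, h10, h11⟩, hopt⟩ := h
  have key := hopt 10 10 0 0 (by norm_num [FeasV])
  linarith

lemma optV_6 : OptV 25 21 20 2.5 0 10 15 10 7.5 0 2.5 := by
  refine ⟨by norm_num [FeasV], ?_⟩
  rintro d' p' a' b' ⟨h1, h2, h3, h4, h5, h6, h7, h8, h9, h10, h11⟩
  linarith

lemma optV_6_val {d p a b : ℝ} (h : OptV 25 21 20 2.5 0 10 15 d p a b) :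
    25 * d - 21 * p = 92.5 := by
  obtain ⟨⟨h1, h2, h3, h4, h5, h6, h7, h8, h9, h10, h11⟩, hopt⟩ := h
  have key := hopt 10 7.5 0 2.5 (by norm_num [FeasV])
  linarith

/-- In the six-interval example of Table IV (load `D=10, U=25`,
generator `P̄=15` with costs `20, 15, 1, 15, 1, 21`, end levels
`2.5, 0, 2.5, 0, 2.5, 0`; in the VLB clearing the 2.5 MWh charged in interval 1 enter
the inter-storage with bid price 20, and are only discharged in interval 6), the split
market clearing attains total social welfare 842.5 while the VLB clearing attains
772.5: VLB can yield strictly lower welfare than split clearing. -/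
theorem table4_vlb_welfare_lower_than_split :
    (∃ d1 p1 d2 p2 d3 p3 d4 p4 d5 p5 d6 p6 : ℝ,
      OptS 25 20 0 2.5 10 15 d1 p1 ∧ OptS 25 15 2.5 0 10 15 d2 p2 ∧
      OptS 25 1 0 2.5 10 15 d3 p3 ∧ OptS 25 15 2.5 0 10 15 d4 p4 ∧
      OptS 25 1 0 2.5 10 15 d5 p5 ∧ OptS 25 21 2.5 0 10 15 d6 p6) ∧
    (∀ d1 p1 d2 p2 d3 p3 d4 p4 d5 p5 d6 p6 : ℝ,
      OptS 25 20 0 2.5 10 15 d1 p1 → OptS 25 15 2.5 0 10 15 d2 p2 →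
      OptS 25 1 0 2.5 10 15 d3 p3 → OptS 25 15 2.5 0 10 15 d4 p4 →
      OptS 25 1 0 2.5 10 15 d5 p5 → OptS 25 21 2.5 0 10 15 d6 p6 →
      (25 * d1 - 20 * p1) + (25 * d2 - 15 * p2) + (25 * d3 - 1 * p3)
        + (25 * d4 - 15 * p4) + (25 * d5 - 1 * p5) + (25 * d6 - 21 * p6) = 842.5) ∧
    (∃ d1 p1 a1 b1 d2 p2 a2 b2 d3 p3 a3 b3 d4 p4 a4 b4 d5 p5 a5 b5 d6 p6 a6 b6 : ℝ,
      OptV 25 20 20 0 2.5 10 15 d1 p1 a1 b1 ∧ OptV 25 15 20 2.5 0 10 15 d2 p2 a2 b2 ∧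
      OptV 25 1 20 2.5 2.5 10 15 d3 p3 a3 b3 ∧ OptV 25 15 20 2.5 0 10 15 d4 p4 a4 b4 ∧
      OptV 25 1 20 2.5 2.5 10 15 d5 p5 a5 b5 ∧ OptV 25 21 20 2.5 0 10 15 d6 p6 a6 b6) ∧
    (∀ d1 p1 a1 b1 d2 p2 a2 b2 d3 p3 a3 b3 d4 p4 a4 b4 d5 p5 a5 b5 d6 p6 a6 b6 : ℝ,
      OptV 25 20 20 0 2.5 10 15 d1 p1 a1 b1 → OptV 25 15 20 2.5 0 10 15 d2 p2 a2 b2 →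
      OptV 25 1 20 2.5 2.5 10 15 d3 p3 a3 b3 → OptV 25 15 20 2.5 0 10 15 d4 p4 a4 b4 →
      OptV 25 1 20 2.5 2.5 10 15 d5 p5 a5 b5 → OptV 25 21 20 2.5 0 10 15 d6 p6 a6 b6 →
      (25 * d1 - 20 * p1) + (25 * d2 - 15 * p2) + (25 * d3 - 1 * p3)
        + (25 * d4 - 15 * p4) + (25 * d5 - 1 * p5) + (25 * d6 - 21 * p6) = 772.5) ∧
    (772.5 : ℝ) < 842.5 := by
  refine ⟨⟨10, 12.5, 10, 7.5, 10, 12.5, 10, 7.5, 10, 12.5, 10, 7.5,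
      optS_charge 20 (by norm_num), optS_discharge 15 (by norm_num),
      optS_charge 1 (by norm_num), optS_discharge 15 (by norm_num),
      optS_charge 1 (by norm_num), optS_discharge 21 (by norm_num)⟩, ?_, ?_, ?_, by norm_num⟩
  · intro d1 p1 d2 p2 d3 p3 d4 p4 d5 p5 d6 p6 h1 h2 h3 h4 h5 h6
    have e1 := optS_charge_val (by norm_num) h1
    have e2 := optS_discharge_val (by norm_num) h2
    have e3 := optS_charge_val (by norm_num) h3
    have e4 := optS_discharge_val (by norm_num) h4
    have e5 := optS_charge_val (by norm_num) h5
    have e6 := optS_discharge_val (by norm_num) h6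
    norm_num at e1 e2 e3 e4 e5 e6 ⊢
    linarith
  · exact ⟨10, 12.5, 2.5, 0, 10, 10, 0, 0, 10, 10, 0, 0, 10, 10, 0, 0, 10, 10, 0, 0,
      10, 7.5, 0, 2.5, optV_1, optV_2, optV_3, optV_2, optV_3, optV_6⟩
  · intro d1 p1 a1 b1 d2 p2 a2 b2 d3 p3 a3 b3 d4 p4 a4 b4 d5 p5 a5 b5 d6 p6 a6 b6
      h1 h2 h3 h4 h5 h6
    have e1 := optV_1_val h1
    have e2 := optV_2_val h2
    have e3 := optV_3_val h3
    have e4 := optV_2_val h4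
    have e5 := optV_3_val h5
    have e6 := optV_6_val h6
    norm_num at e1 e2 e3 e4 e5 e6 ⊢
    linarith
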